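/- Define on (0, T] the function A(t) = ((λ+c)·N₀·(β + (T−t))/(η·h²)) · [ (T·ln 2/(B·R·β·t) − 1)·2^{(T−t)/(B·R·β·t)} + α·h/(N₀·β) + 1 ]. Then A is strictly decreasing on (0, T]. Consequently, if t₁, t₂ ∈ (0, T] satisfy A(t₁) = a₁ and A(t₂) = a₂ with a₁ ≥ a₂, then t₁ ≤ t₂. -/

import Mathlib

open Real Set

lemma aux_f_strictMono (L C E : ℝ) (hL : 0 < L) (hC : 0 < C + 1) :
    StrictMonoOn (fun u : ℝ => (L * u + C) * Real.exp (L * u) + E) (Ici 0) := by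
  apply strictMonoOn_of_deriv_pos (convex_Ici 0)
  · fun_prop
  · intro u hu
    rw [interior_Ici] at hu
    have h1 : HasDerivAt (fun u : ℝ => L * u + C) L u := by
      simpa using ((hasDerivAt_id u).const_mul L).add_const C
    have h2 : HasDerivAt (fun u : ℝ => Real.exp (L * u)) (Real.exp (L * u) * L) u := by
      have h2' :=
        (Real.hasDerivAt_exp (L * u)).comp u ((hasDerivAt_id u).const_mul L)
      simp only [id, mul_one] at h2'
      exact h2'
    have hderiv : HasDerivAt (fun u : ℝ => (L * u + C) * Real.exp (L * u) + E)
        (L * Real.exp (L * u) + (L * u + C) * (Real.exp (L * u) * L)) u := by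
      exact (h1.mul h2).add_const E
    rw [hderiv.deriv]
    have hexp := Real.exp_pos (L * u)
    have hu' : (0 : ℝ) < u := hu
    nlinarith [mul_pos hL hu', mul_pos (mul_pos hL hexp) (mul_pos hL hu'),
      mul_pos (mul_pos hL hexp) hC]

/-- The function `A(t)` arising from the stationarity equation for the optimal
sensor-transmission duration is strictly decreasing on `(0, T]`; consequently,
solutions with larger utility weights have smaller transmission durations. -/
theorem utility_weight_monotone_transmission
    (lam c N0 B R β α h η T : ℝ)
    (hlam : 0 ≤ lam) (hc : 0 < c) (hN0 : 0 < N0) (hB : 0 < B) (hR : 0 < R)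
    (hβ : 0 < β) (hα : 0 < α) (hh : 0 < h) (hη : 0 < η) (hT : 0 < T)
    (A : ℝ → ℝ)
    (hA : ∀ t, A t =
      (lam + c) * N0 * (β + (T - t)) / (η * h ^ 2) *
        ((T * Real.log 2 / (B * R * β * t) - 1) *
            (2 : ℝ) ^ ((T - t) / (B * R * β * t))
          + α * h / (N0 * β) + 1)) :
    StrictAntiOn A (Ioc 0 T) ∧
      ∀ t₁ t₂ : ℝ, t₁ ∈ Ioc 0 T → t₂ ∈ Ioc 0 T →
        ∀ a₁ a₂ : ℝ, A t₁ = a₁ → A t₂ = a₂ → a₁ ≥ a₂ → t₁ ≤ t₂ := by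
  set k := B * R * β with hkdef
  have hk0 : 0 < k := by positivity
  set L := Real.log 2 with hLdef
  have hL : 0 < L := Real.log_pos (by norm_num)
  set D := α * h / (N0 * β) with hDdef
  have hD : 0 < D := by positivity
  set C := L / k - 1 with hCdef
  have hC1 : 0 < C + 1 := by
    have : C + 1 = L / k := by ring
    rw [this]; positivity
  set E := D + 1 with hEdef
  set f := fun u : ℝ => (L * u + C) * Real.exp (L * u) + E with hfdef
  have hmono := aux_f_strictMono L C E hL hC1
  set K := (lam + c) * N0 / (η * h ^ 2) with hKdef
  have hlc : 0 < lam + c := by linarith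
  have hK : 0 < K := by positivity
  have hArw : ∀ t ∈ Ioc 0 T, A t = K * ((β + (T - t)) * f ((T - t) / (k * t))) := by
    intro t ht
    have ht0 : 0 < t := ht.1
    rw [hA]
    have h2 : (2 : ℝ) ^ ((T - t) / (k * t)) = Real.exp (L * ((T - t) / (k * t))) := by
      rw [Real.rpow_def_of_pos (by norm_num)]
    have hT' : T * L / (k * t) - 1 = L * ((T - t) / (k * t)) + C := by
      rw [hCdef]
      field_simp
      ring
    rw [h2, hT', hfdef]
    simp only []
    rw [hKdef, hEdef]
    field_simp
    ring
  have key : StrictAntiOn A (Ioc 0 T) := by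
    intro x hx y hy hxy
    rw [hArw x hx, hArw y hy]
    set ux := (T - x) / (k * x) with huxdef
    set uy := (T - y) / (k * y) with huydef
    have h1 : (0 : ℝ) ≤ uy := div_nonneg (by linarith [hy.2]) (le_of_lt (mul_pos hk0 hy.1))
    have h2 : uy < ux := by
      rw [huydef, huxdef, div_lt_div_iff₀ (mul_pos hk0 hy.1) (mul_pos hk0 hx.1)]
      have hxT : 0 < k * T := by positivity
      nlinarith [mul_pos hk0 (mul_pos hT hx.1), mul_pos hk0 hT,
        mul_pos (mul_pos hk0 hT) (sub_pos.mpr hxy)]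
    have h1' : uy ∈ Ici (0 : ℝ) := h1
    have h2' : ux ∈ Ici (0 : ℝ) := le_of_lt (lt_of_le_of_lt h1 h2)
    have hf0 : f 0 = C + E := by simp [hfdef]
    have hfy_pos : 0 < f uy := by
      have hle : f 0 ≤ f uy := hmono.monotoneOn (self_mem_Ici) h1' h1
      have : 0 < C + E := by rw [hEdef]; linarith
      linarith [hf0 ▸ hle]
    have hfx : f uy < f ux := hmono h1' h2' h2
    have hb : β + (T - y) < β + (T - x) := by linarith
    have hb0 : 0 < β + (T - y) := by linarith [hy.2]
    have : (β + (T - y)) * f uy < (β + (T - x)) * f ux :=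
      mul_lt_mul'' hb hfx (le_of_lt hb0) (le_of_lt hfy_pos)
    exact mul_lt_mul_of_pos_left this hK
  refine ⟨key, ?_⟩
  intro t₁ t₂ h1 h2 a₁ a₂ e1 e2 hge
  by_contra hcon
  push_neg at hcon
  have := key h2 h1 hcon
  rw [e1, e2] at this
  linarith
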